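/- (Normalization lemma) Let C be a cost function with the ASI property with rank function rank, and let A, B be elements with precedence constraint A → B and rank(A) ≥ rank(B). If there exists an optimal (cost-minimal, precedence-respecting) sequence, then there exists an optimal sequence in which B immediately follows A. -/
import Mathlib


/-- Normalization lemma. `P S` means the sequence `S` respects the precedence
constraints; the precedence constraint `a → b` is encoded by `hprec` (in every
valid sequence `a` occurs strictly before `b`), and `hswap` states that an
adjacent interchange of segments preserves validity as long as `a` still
precedes `b`. `C` has the ASI property with rank function `rank` and
`rank [a] ≥ rank [b]`. If an optimal (cost-minimal, precedence-respecting)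
sequence exists, then there is an optimal sequence in which `b` immediately
follows `a`. -/
theorem normalization_lemma {α : Type*} (C : List α → ℝ) (rank : List α → ℝ)
    (P : List α → Prop) (a b : α)
    (asi : ∀ (A B U V : List α), U ≠ [] → V ≠ [] →
      P (A ++ U ++ V ++ B) → P (A ++ V ++ U ++ B) →
      (C (A ++ U ++ V ++ B) ≤ C (A ++ V ++ U ++ B) ↔ rank U ≤ rank V))
    (hprec : ∀ S, P S → ∃ l₁ l₂ : List α, S = l₁ ++ a :: l₂ ∧ b ∈ l₂)
    (hswap : ∀ (X U V Y : List α), P (X ++ U ++ V ++ Y) →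
      (∃ l₁ l₂ : List α, X ++ V ++ U ++ Y = l₁ ++ a :: l₂ ∧ b ∈ l₂) →
      P (X ++ V ++ U ++ Y))
    (hrank : rank [b] ≤ rank [a])
    (hopt : ∃ S, P S ∧ ∀ S', P S' → C S ≤ C S') :
    ∃ S, P S ∧ (∀ S', P S' → C S ≤ C S') ∧
      ∃ l₁ l₂ : List α, S = l₁ ++ a :: b :: l₂ := by
  obtain ⟨S, hS, hSopt⟩ := hopt
  obtain ⟨l₁, l₂, hSeq, hb⟩ := hprec S hS
  obtain ⟨V, l₂', rfl⟩ := List.append_of_mem hb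
  by_cases hV : V = []
  · subst hV
    exact ⟨S, hS, hSopt, l₁, l₂', by simpa using hSeq⟩
  · have hSeq' : S = l₁ ++ [a] ++ V ++ (b :: l₂') := by simpa using hSeq
    by_cases hr : rank V ≤ rank [a]
    · -- swap [a] and V: new sequence l₁ ++ V ++ a :: b :: l₂'
      set T := l₁ ++ V ++ [a] ++ (b :: l₂') with hT
      have hwit : ∃ p q : List α, l₁ ++ V ++ [a] ++ (b :: l₂') = p ++ a :: q ∧ b ∈ q :=
        ⟨l₁ ++ V, b :: l₂', by simp, by simp⟩
      have hPT : P T := by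
        rw [hT]
        exact hswap l₁ [a] V (b :: l₂') (hSeq' ▸ hS) hwit
      have hcost : C T ≤ C S := by
        rw [hSeq', hT]
        exact (asi l₁ (b :: l₂') V [a] hV (by simp) hPT (hSeq' ▸ hS)).2 hr
      refine ⟨T, hPT, fun S' hS' => le_trans hcost (hSopt S' hS'), l₁ ++ V, l₂', by simp [hT]⟩
    · -- rank [a] < rank V, so rank [b] ≤ rank V: swap V and [b]
      have hr' : rank [b] ≤ rank V := le_trans hrank (le_of_not_ge hr)
      have hSeq'' : S = (l₁ ++ [a]) ++ V ++ [b] ++ l₂' := by simpa using hSeq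
      set T := (l₁ ++ [a]) ++ [b] ++ V ++ l₂' with hT
      have hwit : ∃ p q : List α, (l₁ ++ [a]) ++ [b] ++ V ++ l₂' = p ++ a :: q ∧ b ∈ q :=
        ⟨l₁, b :: (V ++ l₂'), by simp, by simp⟩
      have hPT : P T := by
        rw [hT]
        exact hswap (l₁ ++ [a]) V [b] l₂' (hSeq'' ▸ hS) hwit
      have hcost : C T ≤ C S := by
        rw [hSeq'', hT]
        exact (asi (l₁ ++ [a]) l₂' [b] V (by simp) hV hPT (hSeq'' ▸ hS)).2 hr'
      refine ⟨T, hPT, fun S' hS' => le_trans hcost (hSopt S' hS'), l₁, V ++ l₂', by simp [hT]⟩
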